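/- With the infinite prism Ω = {x ∈ ℝ^n : x_1 ≥ ⋯ ≥ x_n ≥ x_1 - √(1+w)} and B := Ω ∩ {x : 0 ≤ Σ x_i ≤ √(1-w(n-1))}, the isometry φ(x) = (x_n+a, x_1+b, …, x_{n-1}+b) maps the base Ω ∩ {Σx_i = 0} of B onto the top Ω ∩ {Σx_i = √(1-w(n-1))} of B, and the translates B^{φ^k}, k ∈ ℤ, have disjoint interiors with union Ω. -/

import Mathlib

theorem schobi_prism_tiles_Omega
    (n : ℕ) (hn : 2 ≤ n) (w : ℝ) (hw1 : -1 < w) (hw2 : w < 1 / ((n : ℝ) - 1))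
    (b a : ℝ)
    (hb : b = (Real.sqrt (1 - w * ((n : ℝ) - 1)) - Real.sqrt (1 + w)) / n)
    (ha : a = b + Real.sqrt (1 + w))
    (e : EuclideanSpace ℝ (Fin n) ≃ᵢ EuclideanSpace ℝ (Fin n))
    (he : ∀ (x : EuclideanSpace ℝ (Fin n)) (i : Fin n),
      e x i =
        if h : (i : ℕ) = 0 then x ⟨n - 1, by omega⟩ + a
        else x ⟨(i : ℕ) - 1, by omega⟩ + b)
    (Ω : Set (EuclideanSpace ℝ (Fin n)))
    (hΩ : Ω = {x : EuclideanSpace ℝ (Fin n) |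
      (∀ i j : Fin n, i ≤ j → x j ≤ x i) ∧
      x ⟨0, by omega⟩ - Real.sqrt (1 + w) ≤ x ⟨n - 1, by omega⟩})
    (Bslab : Set (EuclideanSpace ℝ (Fin n)))
    (hB : Bslab = Ω ∩ {x : EuclideanSpace ℝ (Fin n) |
      0 ≤ ∑ i, x i ∧ (∑ i, x i) ≤ Real.sqrt (1 - w * ((n : ℝ) - 1))}) :
    (e '' (Ω ∩ {x : EuclideanSpace ℝ (Fin n) | (∑ i, x i) = 0}) =
      Ω ∩ {x : EuclideanSpace ℝ (Fin n) | (∑ i, x i) = Real.sqrt (1 - w * ((n : ℝ) - 1))}) ∧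
    (∀ j k : ℤ, j ≠ k →
      Disjoint (interior ((e ^ j) '' Bslab)) (interior ((e ^ k) '' Bslab))) ∧
    (⋃ k : ℤ, (e ^ k) '' Bslab) = Ω := by
  classical
  have hnR : (2:ℝ) ≤ (n:ℝ) := by exact_mod_cast hn
  have hn1R : (0:ℝ) < (n:ℝ) - 1 := by linarith
  have hw2' : w * ((n:ℝ) - 1) < 1 := by
    have := (lt_div_iff₀ hn1R).mp hw2
    linarith
  set s := Real.sqrt (1 + w) with hs_def
  set t := Real.sqrt (1 - w * ((n:ℝ) - 1)) with ht_def
  have hs : 0 < s := Real.sqrt_pos.mpr (by linarith)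
  have ht : 0 < t := Real.sqrt_pos.mpr (by linarith)
  have hnb : (n:ℝ) * b = t - s := by
    rw [hb]; field_simp
  have hkey : a + ((n:ℝ) - 1) * b = t := by
    have h1 : a + ((n:ℝ) - 1) * b = (n:ℝ) * b + s := by rw [ha]; ring
    rw [h1, hnb]; ring
  -- a cleaner form of `he`
  have he' : ∀ (x : EuclideanSpace ℝ (Fin n)) (i : Fin n), e x i =
      if (i:ℕ) = 0 then x ⟨n - 1, by omega⟩ + a else x ⟨(i:ℕ) - 1, by omega⟩ + b := by
    intro x i
    rw [he x i]
    by_cases h : (i:ℕ) = 0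
    · rw [dif_pos h, if_pos h]
    · rw [dif_neg h, if_neg h]
  have he'' : ∀ (x : EuclideanSpace ℝ (Fin n)) (v : ℕ) (hv : v < n), e x ⟨v, hv⟩ =
      if v = 0 then x ⟨n - 1, by omega⟩ + a else x ⟨v - 1, by omega⟩ + b := by
    intro x v hv
    rw [he' x ⟨v, hv⟩]
  have xcongr : ∀ (x : EuclideanSpace ℝ (Fin n)) (p q : Fin n), (p:ℕ) = (q:ℕ) → x p = x q :=
    fun x p q h => by rw [Fin.ext h]
  -- the sum lemma
  have hSum : ∀ x : EuclideanSpace ℝ (Fin n), (∑ i, e x i) = (∑ i, x i) + t := by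
    intro x
    set X : ℕ → ℝ := fun i => if h : i < n then x ⟨i, h⟩ else 0 with hX
    have hx : ∀ i : Fin n, x i = X (i : ℕ) := by
      intro i
      simp only [hX, dif_pos i.isLt]
    set F : ℕ → ℝ := fun i => if i = 0 then X (n-1) + a else X (i-1) + b with hF
    have hex : ∀ i : Fin n, e x i = F (i:ℕ) := by
      intro i
      rw [he' x i]
      simp only [hF, hX]
      by_cases h : (i:ℕ) = 0
      · rw [if_pos h, if_pos h, dif_pos (by omega : n - 1 < n)]
      · rw [if_neg h, if_neg h, dif_pos (by omega : (i:ℕ) - 1 < n)]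
    obtain ⟨m, hm⟩ : ∃ m, n = m + 1 := ⟨n - 1, by omega⟩
    have e1 : (∑ i, e x i) = ∑ i ∈ Finset.range n, F i := by
      rw [← Fin.sum_univ_eq_sum_range F n]
      exact Finset.sum_congr rfl fun i _ => hex i
    have e2 : (∑ i, x i) = ∑ i ∈ Finset.range n, X i := by
      rw [← Fin.sum_univ_eq_sum_range X n]
      exact Finset.sum_congr rfl fun i _ => hx i
    have hF0 : F 0 = X m + a := by
      have hnm : n - 1 = m := by omega
      simp [hF, hnm]
    have hFs : ∀ i : ℕ, F (i+1) = X i + b := by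
      intro i
      simp [hF]
    have hmcast : (m:ℝ) = (n:ℝ) - 1 := by
      rw [hm]; push_cast; ring
    rw [e1, e2, hm, Finset.sum_range_succ' F m, Finset.sum_range_succ X m, hF0]
    have : (∑ i ∈ Finset.range m, F (i+1)) = (∑ i ∈ Finset.range m, X i) + m * b := by
      calc (∑ i ∈ Finset.range m, F (i+1)) = ∑ i ∈ Finset.range m, (X i + b) :=
            Finset.sum_congr rfl fun i _ => hFs i
        _ = (∑ i ∈ Finset.range m, X i) + m * b := by
            rw [Finset.sum_add_distrib, Finset.sum_const, Finset.card_range, nsmul_eq_mul]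
    rw [this]
    have : a + (m:ℝ) * b = t := by rw [hmcast]; exact hkey
    linarith
  -- e maps Ω into Ω
  have hfor : ∀ x : EuclideanSpace ℝ (Fin n), x ∈ Ω → e x ∈ Ω := by
    intro x hx
    rw [hΩ] at hx ⊢
    obtain ⟨hmono, hgap⟩ := hx
    constructor
    · intro i j hij
      rw [he' x i, he' x j]
      have hij' : (i:ℕ) ≤ (j:ℕ) := hij
      by_cases hi : (i:ℕ) = 0
      · by_cases hj : (j:ℕ) = 0
        · rw [if_pos hi, if_pos hj]
        · rw [if_pos hi, if_neg hj]
          have h1 : x ⟨(j:ℕ) - 1, by omega⟩ ≤ x ⟨0, by omega⟩ :=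
            hmono ⟨0, by omega⟩ ⟨(j:ℕ) - 1, by omega⟩ (Fin.mk_le_mk.mpr (by omega))
          have h2 : x ⟨0, by omega⟩ - s ≤ x ⟨n - 1, by omega⟩ := hgap
          rw [ha]
          linarith
      · have hj : ¬ (j:ℕ) = 0 := by omega
        rw [if_neg hi, if_neg hj]
        have h1 : x ⟨(j:ℕ) - 1, by omega⟩ ≤ x ⟨(i:ℕ) - 1, by omega⟩ :=
          hmono ⟨(i:ℕ) - 1, by omega⟩ ⟨(j:ℕ) - 1, by omega⟩ (Fin.mk_le_mk.mpr (by omega))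
        linarith
    · rw [he'' x 0 (by omega), he'' x (n - 1) (by omega)]
      rw [if_pos rfl, if_neg (by omega)]
      have h1 : x ⟨n - 1, by omega⟩ ≤ x ⟨n - 1 - 1, by omega⟩ :=
        hmono ⟨n - 1 - 1, by omega⟩ ⟨n - 1, by omega⟩ (Fin.mk_le_mk.mpr (by omega))
      rw [ha]
      linarith
  -- e⁻¹ maps Ω into Ω
  have hback : ∀ x : EuclideanSpace ℝ (Fin n), e x ∈ Ω → x ∈ Ω := by
    intro x hx
    rw [hΩ] at hx ⊢
    obtain ⟨hmono, hgap⟩ := hx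
    have key1 : ∀ (j : Fin n) (hj : (j:ℕ) + 1 < n), x j = e x ⟨(j:ℕ) + 1, hj⟩ - b := by
      intro j hj
      rw [he'' x ((j:ℕ) + 1) (by omega), if_neg (by omega)]
      have : x ⟨(j:ℕ) + 1 - 1, by omega⟩ = x j := xcongr x _ j (by simp)
      rw [this]; ring
    have key2 : x ⟨n - 1, by omega⟩ = e x ⟨0, by omega⟩ - a := by
      rw [he'' x 0 (by omega), if_pos rfl]; ring
    constructor
    · intro i j hij
      have hij' : (i:ℕ) ≤ (j:ℕ) := hij
      by_cases hj : (j:ℕ) + 1 < n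
      · have hi : (i:ℕ) + 1 < n := by omega
        rw [key1 j hj, key1 i hi]
        have h1 : e x ⟨(j:ℕ) + 1, by omega⟩ ≤ e x ⟨(i:ℕ) + 1, by omega⟩ :=
          hmono ⟨(i:ℕ) + 1, by omega⟩ ⟨(j:ℕ) + 1, by omega⟩ (Fin.mk_le_mk.mpr (by omega))
        linarith
      · have hjv : (j:ℕ) = n - 1 := by omega
        have hxj : x j = x ⟨n - 1, by omega⟩ := xcongr x j _ (by simp [hjv])
        by_cases hi : (i:ℕ) + 1 < n
        · rw [hxj, key2, key1 i hi]
          have h1 : e x ⟨0, by omega⟩ - s ≤ e x ⟨n - 1, by omega⟩ := hgap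
          have h2 : e x ⟨n - 1, by omega⟩ ≤ e x ⟨(i:ℕ) + 1, by omega⟩ :=
            hmono ⟨(i:ℕ) + 1, by omega⟩ ⟨n - 1, by omega⟩ (Fin.mk_le_mk.mpr (by omega))
          rw [ha]
          linarith
        · have : x i = x j := xcongr x i j (by omega)
          rw [this]
    · have h0 : (0:ℕ) + 1 < n := by omega
      rw [key2, key1 ⟨0, by omega⟩ (by simpa using h0)]
      have h1 : e x ⟨(0:ℕ) + 1, by omega⟩ ≤ e x ⟨0, by omega⟩ :=
        hmono ⟨0, by omega⟩ ⟨(0:ℕ) + 1, by omega⟩ (Fin.mk_le_mk.mpr (by omega))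
      rw [ha]
      linarith
  have hiff : ∀ x : EuclideanSpace ℝ (Fin n), e x ∈ Ω ↔ x ∈ Ω := fun x => ⟨hback x, hfor x⟩
  have hSumSymm : ∀ y : EuclideanSpace ℝ (Fin n), (∑ i, e.symm y i) = (∑ i, y i) - t := by
    intro y
    have := hSum (e.symm y)
    rw [e.apply_symm_apply] at this
    linarith
  have hiffSymm : ∀ y : EuclideanSpace ℝ (Fin n), e.symm y ∈ Ω ↔ y ∈ Ω := by
    intro y
    rw [← hiff (e.symm y), e.apply_symm_apply]
  -- behaviour of integer powers of e
  have hz : ∀ (k : ℤ) (x : EuclideanSpace ℝ (Fin n)),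
      ((e ^ k) x ∈ Ω ↔ x ∈ Ω) ∧ (∑ i, ((e ^ k) x) i) = (∑ i, x i) + k * t := by
    intro k
    induction k using Int.induction_on with
    | zero => intro x; simp
    | succ k ih =>
      intro x
      have h1 : (e ^ ((k:ℤ) + 1)) x = (e ^ (k:ℤ)) (e x) := by
        rw [zpow_add_one]; rfl
      rw [h1]
      refine ⟨(ih (e x)).1.trans (hiff x), ?_⟩
      rw [(ih (e x)).2, hSum x]
      push_cast
      ring
    | pred k ih =>
      intro x
      have h1 : (e ^ (-(k:ℤ) - 1)) x = (e ^ (-(k:ℤ))) (e.symm x) := by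
        rw [zpow_sub_one]; rfl
      rw [h1]
      refine ⟨(ih (e.symm x)).1.trans (hiffSymm x), ?_⟩
      rw [(ih (e.symm x)).2, hSumSymm x]
      push_cast
      ring
  -- characterization of the translated slabs
  have himg : ∀ k : ℤ, (e ^ k) '' Bslab =
      Ω ∩ {x : EuclideanSpace ℝ (Fin n) | (k:ℝ) * t ≤ ∑ i, x i ∧ (∑ i, x i) ≤ ((k:ℝ) + 1) * t} := by
    intro k
    ext y
    constructor
    · rintro ⟨x, hxB, rfl⟩
      rw [hB] at hxB
      obtain ⟨hxΩ, h0, h1⟩ := hxB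
      refine ⟨(hz k x).1.mpr hxΩ, ?_, ?_⟩ <;>
      · have hsum := (hz k x).2
        nlinarith [hsum, h0, h1]
    · rintro ⟨hyΩ, hy1, hy2⟩
      refine ⟨(e ^ (-k)) y, ?_, ?_⟩
      · rw [hB]
        refine ⟨(hz (-k) y).1.mpr hyΩ, ?_, ?_⟩ <;>
        · have hsum := (hz (-k) y).2
          push_cast at hsum
          nlinarith [hsum, hy1, hy2]
      · have : (e ^ k) ((e ^ (-k)) y) = (e ^ k * e ^ (-k)) y := rfl
        rw [this, ← zpow_add, add_neg_cancel, zpow_zero]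
        rfl
  refine ⟨?_, ?_, ?_⟩
  · -- the base maps to the top
    ext y
    simp only [Set.mem_image, Set.mem_inter_iff, Set.mem_setOf_eq]
    constructor
    · rintro ⟨x, ⟨hxΩ, hx0⟩, rfl⟩
      exact ⟨hfor x hxΩ, by rw [hSum x, hx0]; ring⟩
    · rintro ⟨hyΩ, hyt⟩
      exact ⟨e.symm y, ⟨(hiffSymm y).mpr hyΩ, by rw [hSumSymm y, hyt]; ring⟩,
        e.apply_symm_apply y⟩
  · -- disjoint interiors
    intro j k hjk
    wlog hlt : j < k generalizing j k
    · exact (this k j hjk.symm (by omega)).symm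
    rw [Set.disjoint_left]
    intro z hzj hzk
    obtain ⟨ε, hε, hball⟩ := Metric.isOpen_iff.mp isOpen_interior z hzj
    set z' : EuclideanSpace ℝ (Fin n) := z + EuclideanSpace.single (⟨0, by omega⟩ : Fin n) (ε/2)
      with hz'
    have hz'mem : z' ∈ (e ^ j) '' Bslab := by
      apply interior_subset
      apply hball
      rw [Metric.mem_ball, dist_eq_norm]
      have : z' - z = EuclideanSpace.single (⟨0, by omega⟩ : Fin n) (ε/2) := by
        rw [hz']; abel
      rw [this, EuclideanSpace.norm_single, Real.norm_eq_abs, abs_of_pos (by linarith)]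
      linarith
    have hsumz' : (∑ i, z' i) = (∑ i, z i) + ε / 2 := by
      rw [hz']
      have happ : ∀ i : Fin n, (z + EuclideanSpace.single (⟨0, by omega⟩ : Fin n) (ε/2)) i
          = z i + (if i = (⟨0, by omega⟩ : Fin n) then ε/2 else 0) := by
        intro i
        rw [PiLp.add_apply, EuclideanSpace.single_apply]
      rw [Finset.sum_congr rfl fun i _ => happ i, Finset.sum_add_distrib,
        Finset.sum_ite_eq' Finset.univ (⟨0, by omega⟩ : Fin n) (fun _ => ε/2)]
      simp
    have h1 : z' ∈ Ω ∩ {x : EuclideanSpace ℝ (Fin n) |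
        (j:ℝ) * t ≤ ∑ i, x i ∧ (∑ i, x i) ≤ ((j:ℝ) + 1) * t} := by
      rw [← himg j]; exact hz'mem
    have h2 : z ∈ Ω ∩ {x : EuclideanSpace ℝ (Fin n) |
        (k:ℝ) * t ≤ ∑ i, x i ∧ (∑ i, x i) ≤ ((k:ℝ) + 1) * t} := by
      rw [← himg k]; exact interior_subset hzk
    obtain ⟨-, -, hb1⟩ := h1
    obtain ⟨-, hb2, -⟩ := h2
    have hk1 : ((j:ℝ) + 1) ≤ (k:ℝ) := by exact_mod_cast hlt
    have hmul : ((j:ℝ) + 1) * t ≤ (k:ℝ) * t := mul_le_mul_of_nonneg_right hk1 (le_of_lt ht)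
    linarith [hb1, hb2, hsumz', hε]
  · -- the union is Ω
    ext x
    simp only [Set.mem_iUnion]
    constructor
    · rintro ⟨k, hk⟩
      rw [himg k] at hk
      exact hk.1
    · intro hx
      refine ⟨⌊(∑ i, x i) / t⌋, ?_⟩
      rw [himg]
      refine ⟨hx, ?_, ?_⟩
      · have h1 := Int.floor_le ((∑ i, x i) / t)
        have := (le_div_iff₀ ht).mp h1
        exact this
      · have h1 := Int.lt_floor_add_one ((∑ i, x i) / t)
        have := (div_lt_iff₀ ht).mp h1
        exact le_of_lt (by push_cast at this ⊢; linarith)
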